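/- Let K be a compact Hausdorff space and suppose that for every ε > 0 there exists a map f : Δ_∞ → C(K) with d_Δ(σ,τ) ≤ ‖f(σ) − f(τ)‖_∞ ≤ (1+ε)·d_Δ(σ,τ) for all σ, τ ∈ Δ_∞ (i.e., Δ_∞ embeds almost isometrically into C(K)). Then the n-th iterated derived set K^(n) is nonempty for every n ∈ ℕ, and consequently the intersection ⋂_{n∈ℕ} K^(n) is nonempty. -/

import Mathlib

/-- The `n`-th iterated derived set of a topological space `K`, taken inside `K`:
`K^(0) = K` and `K^(n+1)` is the set of accumulation points of `K^(n)` in `K`. -/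
def iteratedDerivedSet (K : Type*) [TopologicalSpace K] : ℕ → Set K
  | 0 => Set.univ
  | n + 1 => derivedSet (iteratedDerivedSet K n)

open Filter Topology Set in
/-- In a compact space, every infinite set has an accumulation point. -/
private lemma hamming_exists_accPt {X : Type*} [TopologicalSpace X] [CompactSpace X]
    {S : Set X} (hS : S.Infinite) : ∃ z, AccPt z (𝓟 S) := by
  by_contra hc
  push_neg at hc
  have key : ∀ x : X, ∃ U ∈ 𝓝 x, ∀ y ∈ U ∩ S, y = x := by
    intro x
    have hx := hc x
    rw [accPt_iff_nhds] at hx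
    push_neg at hx
    obtain ⟨U, hU, hU2⟩ := hx
    exact ⟨U, hU, hU2⟩
  choose U hU hU2 using key
  obtain ⟨t, -, ht⟩ := isCompact_univ.elim_nhds_subcover U (fun x _ => hU x)
  have hsub : S ⊆ ↑t := by
    intro y hy
    have : y ∈ ⋃ x ∈ t, U x := ht (mem_univ y)
    simp only [Set.mem_iUnion] at this
    obtain ⟨x, hx, hyx⟩ := this
    have := hU2 x y ⟨hyx, hy⟩
    exact this ▸ hx
  exact hS (t.finite_toSet.subset hsub)

/-- Pigeonhole for ultrafilters: a function with finite range is constant on a set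
belonging to the ultrafilter. -/
private lemma hamming_ultra_const {α : Type*} (U : Ultrafilter ℕ) (g : ℕ → α)
    (hfin : (Set.range g).Finite) : ∃ v, {t | g t = v} ∈ U := by
  have hmem : (⋃ v ∈ Set.range g, {t | g t = v}) ∈ U := by
    have huniv : (⋃ v ∈ Set.range g, {t | g t = v}) = Set.univ := by
      ext t
      simp only [Set.mem_iUnion, Set.mem_setOf_eq, Set.mem_univ, iff_true]
      exact ⟨g t, ⟨t, rfl⟩, rfl⟩
    rw [huniv]; exact Filter.univ_mem
  obtain ⟨v, -, hv⟩ := (Ultrafilter.finite_biUnion_mem_iff hfin).mp hmem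
  exact ⟨v, hv⟩

/-- Norm attainment for continuous functions on a nonempty compact space. -/
private lemma hamming_norm_attain {K : Type*} [TopologicalSpace K] [CompactSpace K] [Nonempty K]
    (g : C(K, ℝ)) : ∃ x, ‖g‖ ≤ |g x| := by
  obtain ⟨x, -, hx⟩ := isCompact_univ.exists_isMaxOn Set.univ_nonempty
    ((continuous_abs.comp g.continuous).continuousOn)
  refine ⟨x, ?_⟩
  rw [ContinuousMap.norm_le _ (abs_nonneg _)]
  intro y
  simpa [Real.norm_eq_abs] using hx (Set.mem_univ y)

set_option maxHeartbeats 1000000 in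
/-- If `K` is compact Hausdorff and the infinite Hamming cube `Δ_∞` embeds almost
isometrically into `C(K)`, then every iterated derived set `K^(n)` is nonempty, and
consequently `⋂_n K^(n)` is nonempty. -/
theorem nonempty_iInter_iteratedDerivedSet_of_hammingCube_ai
    (K : Type*) [TopologicalSpace K] [CompactSpace K] [T2Space K]
    (h : ∀ ε : ℝ, 0 < ε → ∃ f : Finset ℕ → C(K, ℝ),
      ∀ σ τ : Finset ℕ,
        ((symmDiff σ τ).card : ℝ) ≤ ‖f σ - f τ‖ ∧
          ‖f σ - f τ‖ ≤ (1 + ε) * ((symmDiff σ τ).card : ℝ)) :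
    (∀ n : ℕ, (iteratedDerivedSet K n).Nonempty) ∧
      (⋂ n : ℕ, iteratedDerivedSet K n).Nonempty := by
  classical
  have main : ∀ n : ℕ, (iteratedDerivedSet K n).Nonempty := by
    intro n
    set ε : ℝ := 1 / (2 * (n : ℝ) + 2) with hεdef
    have hεpos : 0 < ε := by positivity
    obtain ⟨f, hf⟩ := h ε hεpos
    -- `K` is nonempty
    have hK : Nonempty K := by
      by_contra hK'
      have hempty : IsEmpty K := not_nonempty_iff.mp hK'
      have h0 : f {0} - f ∅ = 0 := ContinuousMap.ext fun x => isEmptyElim x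
      have h1 := (hf {0} ∅).1
      rw [h0, norm_zero] at h1
      have hcard : ((symmDiff ({0} : Finset ℕ) ∅).card : ℝ) = 1 := by
        have : (symmDiff ({0} : Finset ℕ) ∅).card = 1 := rfl
        rw [this]; norm_num
      rw [hcard] at h1
      linarith
    -- pointwise values are bounded by the norm
    have ptle : ∀ (F G : C(K, ℝ)) (x : K), |F x - G x| ≤ ‖F - G‖ := by
      intro F G x
      have h1 := ContinuousMap.norm_coe_le_norm (F - G) x
      simpa [Real.norm_eq_abs] using h1
    have hεn : ε * (4 * (n : ℝ)) < 2 := by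
      rw [hεdef, div_mul_eq_mul_div, div_lt_iff₀ (by positivity)]
      nlinarith [Nat.cast_nonneg (α := ℝ) n]
    -- Main claim, by induction on the level `k`.
    have claim : ∀ k : ℕ, k ≤ n → ∀ σ τ : Finset ℕ,
        (symmDiff σ τ).card ≤ 2 * (n - k) + 1 →
        ∃ y, y ∈ iteratedDerivedSet K k ∧
          ((symmDiff σ τ).card : ℝ) - 2 * k * ε ≤ |f σ y - f τ y| := by
      intro k
      induction k with
      | zero =>
        intro _ σ τ _
        obtain ⟨y, hy⟩ := hamming_norm_attain (f σ - f τ)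
        refine ⟨y, Set.mem_univ y, ?_⟩
        have h1 := (hf σ τ).1
        have h2 : |(f σ - f τ) y| = |f σ y - f τ y| := by
          rw [ContinuousMap.sub_apply]
        rw [h2] at hy
        push_cast
        linarith
      | succ k ih =>
        intro hk σ τ hcard
        have hkn : k ≤ n := Nat.le_of_succ_le hk
        set d : ℕ := (symmDiff σ τ).card with hd
        -- fresh indices
        set c : ℕ → ℕ := fun t => (σ ∪ τ).sup id + 1 + t with hc
        have hcσ : ∀ t, c t ∉ σ := by
          intro t hmem
          have hle : id (c t) ≤ (σ ∪ τ).sup id := Finset.le_sup (Finset.mem_union_left τ hmem)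
          simp only [id_eq, hc] at hle
          omega
        have hcτ : ∀ t, c t ∉ τ := by
          intro t hmem
          have hle : id (c t) ≤ (σ ∪ τ).sup id := Finset.le_sup (Finset.mem_union_right σ hmem)
          simp only [id_eq, hc] at hle
          omega
        have hcinj : ∀ t s : ℕ, c t = c s → t = s := by
          intro t s hts
          simp only [hc] at hts
          omega
        set A : ℕ → Finset ℕ := fun t => insert (c t) σ with hA
        set B : ℕ → Finset ℕ := fun s => insert (c s) τ with hB
        have hnotsd : ∀ t, c t ∉ symmDiff σ τ := by
          intro t hmem
          rcases Finset.mem_symmDiff.mp hmem with ⟨h1, -⟩ | ⟨h1, -⟩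
          exacts [hcσ t h1, hcτ t h1]
        have cardAB : ∀ t s : ℕ, t ≠ s → (symmDiff (A t) (B s)).card = d + 2 := by
          intro t s hts
          have hne : c t ≠ c s := fun hh => hts (hcinj _ _ hh)
          have h1 := hcσ t; have h2 := hcτ t; have h3 := hcσ s; have h4 := hcτ s
          have hset : symmDiff (A t) (B s) = insert (c t) (insert (c s) (symmDiff σ τ)) := by
            ext x
            simp only [hA, hB, Finset.mem_symmDiff, Finset.mem_insert]
            by_cases hxa : x = c t <;> by_cases hxb : x = c s <;> subst_vars <;> tauto
          have hnm : c t ∉ insert (c s) (symmDiff σ τ) := by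
            simp only [Finset.mem_insert]
            push_neg
            exact ⟨hne, hnotsd t⟩
          rw [hset, Finset.card_insert_of_notMem hnm,
            Finset.card_insert_of_notMem (hnotsd s)]
        have cardABeq : ∀ s : ℕ, (symmDiff (A s) (B s)).card = d := by
          intro s
          have h3 := hcσ s; have h4 := hcτ s
          have hset : symmDiff (A s) (B s) = symmDiff σ τ := by
            ext x
            simp only [hA, hB, Finset.mem_symmDiff, Finset.mem_insert]
            by_cases hxa : x = c s <;> subst_vars <;> tauto
          rw [hset]
        have cardAσ : ∀ t : ℕ, (symmDiff (A t) σ).card = 1 := by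
          intro t
          have h1 := hcσ t
          have hset : symmDiff (A t) σ = {c t} := by
            ext x
            simp only [hA, Finset.mem_symmDiff, Finset.mem_insert, Finset.mem_singleton]
            by_cases hxa : x = c t <;> subst_vars <;> tauto
          rw [hset, Finset.card_singleton]
        have cardBτ : ∀ s : ℕ, (symmDiff (B s) τ).card = 1 := by
          intro s
          have h2 := hcτ s
          have hset : symmDiff (B s) τ = {c s} := by
            ext x
            simp only [hB, Finset.mem_symmDiff, Finset.mem_insert, Finset.mem_singleton]
            by_cases hxa : x = c s <;> subst_vars <;> tauto
          rw [hset, Finset.card_singleton]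
        -- peaks of boosted pairs
        have hpair : ∀ t s : ℕ, t ≠ s → ∃ y, y ∈ iteratedDerivedSet K k ∧
            ((d : ℝ) + 2) - 2 * k * ε ≤ |f (A t) y - f (B s) y| := by
          intro t s hts
          have hcard2 : (symmDiff (A t) (B s)).card ≤ 2 * (n - k) + 1 := by
            rw [cardAB t s hts]; omega
          obtain ⟨y, hy1, hy2⟩ := ih hkn (A t) (B s) hcard2
          refine ⟨y, hy1, ?_⟩
          rw [cardAB t s hts] at hy2
          push_cast at hy2 ⊢
          linarith
        choose Y hY1 hY2 using hpair
        set R : Set K := {x : K | ∃ t s : ℕ, ∃ hts : t ≠ s, Y t s hts = x} with hR0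
        by_cases hR : R.Infinite
        · -- spread case: an accumulation point of the peaks works
          have hsub1 : R ⊆ iteratedDerivedSet K k := by
            rintro x ⟨t, s, hts, rfl⟩; exact hY1 t s hts
          set C : Set K := {x | (d : ℝ) - 2 * ((k : ℝ) + 1) * ε ≤ |f σ x - f τ x|} with hC
          have hCclosed : IsClosed C :=
            isClosed_le continuous_const (((f σ).continuous.sub (f τ).continuous).abs)
          have hsub2 : R ⊆ C := by
            rintro x ⟨t, s, hts, rfl⟩
            have hb := hY2 t s hts
            set x' : K := Y t s hts
            have e0 := (hf (A t) σ).2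
            rw [cardAσ t] at e0
            have e1 : |f (A t) x' - f σ x'| ≤ (1 + ε) := by
              have := ptle (f (A t)) (f σ) x'
              push_cast at e0
              linarith
            have e0' := (hf (B s) τ).2
            rw [cardBτ s] at e0'
            have e2 : |f (B s) x' - f τ x'| ≤ (1 + ε) := by
              have := ptle (f (B s)) (f τ) x'
              push_cast at e0'
              linarith
            have tri1 : |f (A t) x' - f (B s) x'| ≤
                |f (A t) x' - f σ x'| + |f σ x' - f (B s) x'| := abs_sub_le _ _ _
            have tri2 : |f σ x' - f (B s) x'| ≤
                |f σ x' - f τ x'| + |f τ x' - f (B s) x'| := abs_sub_le _ _ _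
            have habs : |f τ x' - f (B s) x'| = |f (B s) x' - f τ x'| := abs_sub_comm _ _
            show (d : ℝ) - 2 * ((k : ℝ) + 1) * ε ≤ |f σ x' - f τ x'|
            rw [habs] at tri2
            linarith
          obtain ⟨z, hz⟩ := hamming_exists_accPt hR
          have hz1 : z ∈ iteratedDerivedSet K (k + 1) := by
            show z ∈ derivedSet (iteratedDerivedSet K k)
            exact derivedSet_mono _ _ hsub1 hz
          have hz2 : z ∈ C := by
            have hzc : z ∈ closure R := derivedSet_subset_closure R hz
            exact closure_minimal hsub2 hCclosed hzc
          refine ⟨z, hz1, ?_⟩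
          have hz2' : (d : ℝ) - 2 * ((k : ℝ) + 1) * ε ≤ |f σ z - f τ z| := hz2
          push_cast
          linarith [hz2']
        · -- concentration case: contradiction
          exfalso
          rw [Set.not_infinite] at hR
          set U : Ultrafilter ℕ := Filter.hyperfilter ℕ with hU
          have Uinf : ∀ s : Set ℕ, s ∈ U → s.Infinite := by
            intro s hs
            by_contra hfin
            rw [Set.not_infinite] at hfin
            exact Filter.notMem_hyperfilter_of_finite hfin hs
          have junk : K := Classical.choice hK
          set color : ℕ → ℕ → K × Bool := fun t s =>
            if hts : t ≠ s then
              (Y t s hts,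
                if 0 ≤ f (A t) (Y t s hts) - f (B s) (Y t s hts) then true else false)
            else (junk, true) with hcolor
          set S0 : Set (K × Bool) := (R ∪ {junk}) ×ˢ (Set.univ : Set Bool) with hS0
          have hS0fin : S0.Finite := (hR.union (Set.finite_singleton _)).prod Set.finite_univ
          have hrange : ∀ t, Set.range (color t) ⊆ S0 := by
            rintro t p ⟨s, rfl⟩
            by_cases hts : t ≠ s
            · rw [hcolor]
              simp only [dif_pos hts]
              exact ⟨Or.inl ⟨t, s, hts, rfl⟩, trivial⟩
            · rw [hcolor]
              simp only [dif_neg hts]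
              exact ⟨Or.inr rfl, trivial⟩
          have hv : ∀ t, ∃ w, {s | color t s = w} ∈ U :=
            fun t => hamming_ultra_const U (color t) (hS0fin.subset (hrange t))
          choose v hvmem using hv
          have hvrange : Set.range v ⊆ S0 := by
            rintro w ⟨t, rfl⟩
            obtain ⟨s, hs⟩ := Ultrafilter.nonempty_of_mem (hvmem t)
            exact hs ▸ hrange t ⟨s, rfl⟩
          obtain ⟨vhat, hAset⟩ := hamming_ultra_const U v (hS0fin.subset hvrange)
          obtain ⟨xhat, bhat⟩ := vhat
          obtain ⟨t0, ht0⟩ := (Uinf _ hAset).nonempty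
          have ht0' : v t0 = (xhat, bhat) := ht0
          have hB0 : {s | color t0 s = (xhat, bhat)} ∈ U := by
            rw [← ht0']; exact hvmem t0
          have hS1 : ({t | v t = (xhat, bhat)} ∩ {s | color t0 s = (xhat, bhat)}).Infinite :=
            Uinf _ (Filter.inter_mem hAset hB0)
          obtain ⟨s0, hs0⟩ := (hS1.diff (Set.finite_singleton t0)).nonempty
          obtain ⟨⟨hs0A, hs0B⟩, hs0ne⟩ := hs0
          have hC0 : {u | color s0 u = (xhat, bhat)} ∈ U := by
            rw [← show v s0 = (xhat, bhat) from hs0A]; exact hvmem s0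
          obtain ⟨u0, hu0⟩ :=
            ((Uinf _ hC0).diff ((Set.finite_singleton t0).union (Set.finite_singleton s0))).nonempty
          obtain ⟨hu0C, hu0ne⟩ := hu0
          have hne1 : t0 ≠ s0 := by
            intro hh
            exact hs0ne (by simp [hh])
          have hne2 : s0 ≠ u0 := by
            intro hh
            exact hu0ne (by simp [hh])
          have hne3 : t0 ≠ u0 := by
            intro hh
            exact hu0ne (by simp [hh])
          have hcol1 : color t0 s0 = (xhat, bhat) := hs0B
          have hcol2 : color s0 u0 = (xhat, bhat) := hu0C
          rw [hcolor] at hcol1 hcol2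
          simp only [dif_pos hne1] at hcol1
          simp only [dif_pos hne2] at hcol2
          have hY1eq : Y t0 s0 hne1 = xhat := congrArg Prod.fst hcol1
          have hY2eq : Y s0 u0 hne2 = xhat := congrArg Prod.fst hcol2
          have hb1 : (if 0 ≤ f (A t0) (Y t0 s0 hne1) - f (B s0) (Y t0 s0 hne1) then true
              else false) = bhat := congrArg Prod.snd hcol1
          have hb2 : (if 0 ≤ f (A s0) (Y s0 u0 hne2) - f (B u0) (Y s0 u0 hne2) then true
              else false) = bhat := congrArg Prod.snd hcol2
          rw [hY1eq] at hb1
          rw [hY2eq] at hb2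
          have pin1 := hY2 t0 s0 hne1
          have pin2 := hY2 s0 u0 hne2
          rw [hY1eq] at pin1
          rw [hY2eq] at pin2
          -- upper bounds
          have up0 := (hf (A s0) (B s0)).2
          rw [cardABeq s0] at up0
          have up1 : |f (A s0) xhat - f (B s0) xhat| ≤ (1 + ε) * (d : ℝ) := by
            have := ptle (f (A s0)) (f (B s0)) xhat
            linarith
          have up0' := (hf (A t0) (B u0)).2
          rw [cardAB t0 u0 hne3] at up0'
          have up2 : |f (A t0) xhat - f (B u0) xhat| ≤ (1 + ε) * ((d : ℝ) + 2) := by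
            have := ptle (f (A t0)) (f (B u0)) xhat
            push_cast at up0'
            linarith
          -- arithmetic facts
          have hnat : 4 * k + 2 * d + 2 ≤ 4 * n := by omega
          have hnatR : 4 * (k : ℝ) + 2 * (d : ℝ) + 2 ≤ 4 * (n : ℝ) := by exact_mod_cast hnat
          have hprod : ε * (4 * (k : ℝ) + 2 * (d : ℝ) + 2) ≤ ε * (4 * (n : ℝ)) :=
            mul_le_mul_of_nonneg_left hnatR hεpos.le
          set X1 : ℝ := f (A t0) xhat - f (B s0) xhat with hX1
          set X2 : ℝ := f (A s0) xhat - f (B u0) xhat with hX2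
          have hidsum : X1 + X2 =
              (f (A s0) xhat - f (B s0) xhat) + (f (A t0) xhat - f (B u0) xhat) := by
            rw [hX1, hX2]; ring
          have hle1 : f (A s0) xhat - f (B s0) xhat ≤ |f (A s0) xhat - f (B s0) xhat| :=
            le_abs_self _
          have hle2 : f (A t0) xhat - f (B u0) xhat ≤ |f (A t0) xhat - f (B u0) xhat| :=
            le_abs_self _
          have hle1' : -(f (A s0) xhat - f (B s0) xhat) ≤ |f (A s0) xhat - f (B s0) xhat| :=
            neg_le_abs _
          have hle2' : -(f (A t0) xhat - f (B u0) xhat) ≤ |f (A t0) xhat - f (B u0) xhat| :=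
            neg_le_abs _
          cases bhat with
          | true =>
            have hx1 : 0 ≤ X1 := by
              by_contra hneg
              rw [if_neg hneg] at hb1
              exact Bool.noConfusion hb1
            have hx2 : 0 ≤ X2 := by
              by_contra hneg
              rw [if_neg hneg] at hb2
              exact Bool.noConfusion hb2
            rw [abs_of_nonneg hx1] at pin1
            rw [abs_of_nonneg hx2] at pin2
            nlinarith [pin1, pin2, up1, up2, hprod, hεn, hidsum, hle1, hle2]
          | false =>
            have hx1 : ¬ 0 ≤ X1 := by
              intro hpos
              rw [if_pos hpos] at hb1
              exact Bool.noConfusion hb1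
            have hx2 : ¬ 0 ≤ X2 := by
              intro hpos
              rw [if_pos hpos] at hb2
              exact Bool.noConfusion hb2
            rw [abs_of_neg (lt_of_not_ge hx1)] at pin1
            rw [abs_of_neg (lt_of_not_ge hx2)] at pin2
            nlinarith [pin1, pin2, up1, up2, hprod, hεn, hidsum, hle1', hle2']
    obtain ⟨y, hy, -⟩ := claim n le_rfl {0} ∅ (by
      have hone : (symmDiff ({0} : Finset ℕ) ∅).card = 1 := rfl
      omega)
    exact ⟨y, hy⟩
  refine ⟨main, ?_⟩
  have hclosed : ∀ m : ℕ, IsClosed (iteratedDerivedSet K m) := by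
    intro m
    cases m with
    | zero => exact isClosed_univ
    | succ m => exact isClosed_derivedSet _
  have hdec : ∀ m : ℕ, iteratedDerivedSet K (m + 1) ⊆ iteratedDerivedSet K m := by
    intro m
    exact (derivedSet_subset_closure _).trans (hclosed m).closure_subset
  exact IsCompact.nonempty_iInter_of_sequence_nonempty_isCompact_isClosed _ hdec main
    (by rw [show iteratedDerivedSet K 0 = Set.univ from rfl]; exact isCompact_univ) hclosed
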